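/- (Splittability of III* into I₆ + II + I₁ and into I₆ + I₂ + I₁) (a) There exist matrices C, D, B ∈ SL(2,ℤ) with C conjugate in SL(2,ℤ) to A_{I₆} = [[1,6],[0,1]], D conjugate to A_{II} = [[1,1],[-1,0]], and B conjugate to A_{I₁} = [[1,1],[0,1]], such that C·D·B is conjugate to A_{III*} = [[0,-1],[1,0]]. (b) There exist matrices C, D, B ∈ SL(2,ℤ) with C conjugate to A_{I₆}, D conjugate to A_{I₂} = [[1,2],[0,1]], and B conjugate to A_{I₁}, such that C·D·B is conjugate to A_{III*}. In other words, the fiber type III* admits monodromy decompositions into I₆ + II + I₁ and into I₆ + I₂ + I₁. -/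

import Mathlib

/-- The special linear group `SL(2, ℤ)`. -/
abbrev SL2Z := Matrix.SpecialLinearGroup (Fin 2) ℤ

/-- `A` is conjugate to `B` in `SL(2, ℤ)`: there is `P ∈ SL(2,ℤ)` with `P * A * P⁻¹ = B`. -/
def ConjTo (A B : SL2Z) : Prop := ∃ P : SL2Z, P * A * P⁻¹ = B

/-- The standard monodromy matrix `A_{I_n} = [[1,n],[0,1]]`. -/
def AI (n : ℤ) : SL2Z := ⟨!![1, n; 0, 1], by simp [Matrix.det_fin_two_of]⟩

/-- The standard monodromy matrix `A_{II} = [[1,1],[-1,0]]`. -/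
def AII : SL2Z := ⟨!![1, 1; -1, 0], by norm_num [Matrix.det_fin_two_of]⟩

/-- The standard monodromy matrix `A_{III} = [[0,1],[-1,0]]`. -/
def AIII : SL2Z := ⟨!![0, 1; -1, 0], by norm_num [Matrix.det_fin_two_of]⟩

/-- The standard monodromy matrix `A_{IV} = [[0,1],[-1,-1]]`. -/
def AIV : SL2Z := ⟨!![0, 1; -1, -1], by norm_num [Matrix.det_fin_two_of]⟩

/-- The standard monodromy matrix `A_{I₀*} = -I`. -/
def negI : SL2Z := ⟨!![-1, 0; 0, -1], by norm_num [Matrix.det_fin_two_of]⟩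

/-- The standard monodromy matrix `A_{I_n*} = -[[1,n],[0,1]]`. -/
def AIstar (n : ℤ) : SL2Z := ⟨!![-1, -n; 0, -1], by simp [Matrix.det_fin_two_of]⟩

/-- The standard monodromy matrix `A_{IV*} = [[-1,-1],[1,0]]`. -/
def AIVstar : SL2Z := ⟨!![-1, -1; 1, 0], by norm_num [Matrix.det_fin_two_of]⟩

/-- The standard monodromy matrix `A_{III*} = [[0,-1],[1,0]]`. -/
def AIIIstar : SL2Z := ⟨!![0, -1; 1, 0], by norm_num [Matrix.det_fin_two_of]⟩

/-- The standard monodromy matrix `A_{II*} = [[0,-1],[1,1]]`. -/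
def AIIstar : SL2Z := ⟨!![0, -1; 1, 1], by norm_num [Matrix.det_fin_two_of]⟩

private def mk2 (a b c d : ℤ) (h : a * d - b * c = 1 := by norm_num) : SL2Z :=
  ⟨!![a, b; c, d], by simp [Matrix.det_fin_two_of, h]⟩

private lemma conjTo_of_comm (A X P : SL2Z) (h : P * A = X * P) : ConjTo A X :=
  ⟨P, by rw [mul_inv_eq_iff_eq_mul, h]⟩

/-- The fiber type `III*` admits monodromy decompositions into `I₆ + II + I₁` and
into `I₆ + I₂ + I₁`. -/
theorem IIIstar_decomposition_I6_II_I1_and_I6_I2_I1 :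
    (∃ C D B : SL2Z, ConjTo C (AI 6) ∧ ConjTo D AII ∧ ConjTo B (AI 1) ∧
      ConjTo (C * D * B) AIIIstar) ∧
    (∃ C D B : SL2Z, ConjTo C (AI 6) ∧ ConjTo D (AI 2) ∧ ConjTo B (AI 1) ∧
      ConjTo (C * D * B) AIIIstar) := by
  constructor
  · refine ⟨mk2 7 6 (-6) (-5), mk2 2 1 (-3) (-1), mk2 (-1) 1 (-4) 3, ?_, ?_, ?_, ?_⟩
    · refine conjTo_of_comm _ _ (mk2 2 3 (-1) (-1)) ?_
      ext i j; simp only [Matrix.SpecialLinearGroup.coe_mul]; fin_cases i <;> fin_cases j <;>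
        simp [mk2, AI, Matrix.mul_apply, Fin.sum_univ_two]
    · refine conjTo_of_comm _ _ (mk2 1 1 (-2) (-1)) ?_
      ext i j; simp only [Matrix.SpecialLinearGroup.coe_mul]; fin_cases i <;> fin_cases j <;>
        simp [mk2, AII, Matrix.mul_apply, Fin.sum_univ_two]
    · refine conjTo_of_comm _ _ (mk2 (-3) 1 2 (-1)) ?_
      ext i j; simp only [Matrix.SpecialLinearGroup.coe_mul]; fin_cases i <;> fin_cases j <;>
        simp [mk2, AI, Matrix.mul_apply, Fin.sum_univ_two]
    · refine conjTo_of_comm _ _ 1 ?_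
      ext i j; simp only [Matrix.SpecialLinearGroup.coe_mul]; fin_cases i <;> fin_cases j <;>
        simp [mk2, AIIIstar, Matrix.mul_apply, Fin.sum_univ_two]
  · refine ⟨mk2 13 24 (-6) (-11), mk2 3 2 (-2) (-1), mk2 (-2) 1 (-9) 4, ?_, ?_, ?_, ?_⟩
    · refine conjTo_of_comm _ _ (mk2 1 3 (-1) (-2)) ?_
      ext i j; simp only [Matrix.SpecialLinearGroup.coe_mul]; fin_cases i <;> fin_cases j <;>
        simp [mk2, AI, Matrix.mul_apply, Fin.sum_univ_two]
    · refine conjTo_of_comm _ _ (mk2 2 3 (-1) (-1)) ?_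
      ext i j; simp only [Matrix.SpecialLinearGroup.coe_mul]; fin_cases i <;> fin_cases j <;>
        simp [mk2, AI, Matrix.mul_apply, Fin.sum_univ_two]
    · refine conjTo_of_comm _ _ (mk2 (-1) 0 3 (-1)) ?_
      ext i j; simp only [Matrix.SpecialLinearGroup.coe_mul]; fin_cases i <;> fin_cases j <;>
        simp [mk2, AI, Matrix.mul_apply, Fin.sum_univ_two]
    · refine conjTo_of_comm _ _ 1 ?_
      ext i j; simp only [Matrix.SpecialLinearGroup.coe_mul]; fin_cases i <;> fin_cases j <;>
        simp [mk2, AIIIstar, Matrix.mul_apply, Fin.sum_univ_two]
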